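/- In anticipatory fictitious play applied symmetrically to C^n for n = 3 or n = 4, the quantity max_j Δ_{t,j} (where Δ_t = t C^n x̄_t) is bounded above by 2 for all t, for arbitrary tiebreaking; consequently max_j (C^n x̄_t)_j ≤ 2/t, i.e., the exploitability of x̄_t is O(t⁻¹). -/

import Mathlib

open Matrix Finset

def S3 (x y z : ℝ) : Prop :=
    (x = -2 ∧ y = 1 ∧ z = 1) ∨
    (x = -1 ∧ y = 0 ∧ z = 1) ∨
    (x = -1 ∧ y = 1 ∧ z = 0) ∨
    (x = 0 ∧ y = -1 ∧ z = 1) ∨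
    (x = 0 ∧ y = 0 ∧ z = 0) ∨
    (x = 0 ∧ y = 1 ∧ z = -1) ∨
    (x = 1 ∧ y = -2 ∧ z = 1) ∨
    (x = 1 ∧ y = -1 ∧ z = 0) ∨
    (x = 1 ∧ y = 0 ∧ z = -1) ∨
    (x = 1 ∧ y = 1 ∧ z = -2)

noncomputable def cmat3 : ZMod 3 → ZMod 3 → ℝ :=
  fun j a => if j = a + 1 then 1 else if j = a - 1 then -1 else 0

lemma cmat3_00 : cmat3 (0 : ZMod 3) 0 = 0 := by rw [cmat3]; rw [if_neg (by decide), if_neg (by decide)]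
lemma cmat3_01 : cmat3 (0 : ZMod 3) 1 = -1 := by rw [cmat3]; rw [if_neg (by decide), if_pos (by decide)]
lemma cmat3_02 : cmat3 (0 : ZMod 3) 2 = 1 := by rw [cmat3]; rw [if_pos (by decide)]
lemma cmat3_10 : cmat3 (1 : ZMod 3) 0 = 1 := by rw [cmat3]; rw [if_pos (by decide)]
lemma cmat3_11 : cmat3 (1 : ZMod 3) 1 = 0 := by rw [cmat3]; rw [if_neg (by decide), if_neg (by decide)]
lemma cmat3_12 : cmat3 (1 : ZMod 3) 2 = -1 := by rw [cmat3]; rw [if_neg (by decide), if_pos (by decide)]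
lemma cmat3_20 : cmat3 (2 : ZMod 3) 0 = -1 := by rw [cmat3]; rw [if_neg (by decide), if_pos (by decide)]
lemma cmat3_21 : cmat3 (2 : ZMod 3) 1 = 1 := by rw [cmat3]; rw [if_pos (by decide)]
lemma cmat3_22 : cmat3 (2 : ZMod 3) 2 = 0 := by rw [cmat3]; rw [if_neg (by decide), if_neg (by decide)]

lemma S3_bound (x y z : ℝ) (h : S3 x y z) : x ≤ 2 ∧ y ≤ 2 ∧ z ≤ 2 := by
  simp only [S3] at h
  rcases h with ⟨rfl,rfl,rfl⟩|⟨rfl,rfl,rfl⟩|⟨rfl,rfl,rfl⟩|⟨rfl,rfl,rfl⟩|⟨rfl,rfl,rfl⟩|⟨rfl,rfl,rfl⟩|⟨rfl,rfl,rfl⟩|⟨rfl,rfl,rfl⟩|⟨rfl,rfl,rfl⟩|⟨rfl,rfl,rfl⟩ <;> norm_num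

lemma afp_tri3 : ∀ z : ZMod 3, z = 0 ∨ z = 1 ∨ z = 2 := by decide

lemma afp_step3 (D : ZMod 3 → ℝ) (a b : ZMod 3)
    (hS : S3 (D 0) (D 1) (D 2))
    (ha : ∀ j, D j ≤ D a)
    (hb : ∀ j, D j + cmat3 j a ≤ D b + cmat3 b a) :
    S3 (D 0 + cmat3 0 b) (D 1 + cmat3 1 b) (D 2 + cmat3 2 b) := by
  have ha0 := ha (0 : ZMod 3)
  have ha1 := ha (1 : ZMod 3)
  have ha2 := ha (2 : ZMod 3)
  have hb0 := hb (0 : ZMod 3)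
  have hb1 := hb (1 : ZMod 3)
  have hb2 := hb (2 : ZMod 3)
  clear ha hb
  simp only [S3] at hS ⊢
  rcases afp_tri3 a with rfl|rfl|rfl <;>
    rcases afp_tri3 b with rfl|rfl|rfl <;>
    rcases hS with ⟨h0,h1,h2⟩|⟨h0,h1,h2⟩|⟨h0,h1,h2⟩|⟨h0,h1,h2⟩|⟨h0,h1,h2⟩|⟨h0,h1,h2⟩|⟨h0,h1,h2⟩|⟨h0,h1,h2⟩|⟨h0,h1,h2⟩|⟨h0,h1,h2⟩ <;>
    (revert ha0 ha1 ha2 hb0 hb1 hb2; norm_num [cmat3_00, cmat3_01, cmat3_02, cmat3_10, cmat3_11, cmat3_12, cmat3_20, cmat3_21, cmat3_22, h0, h1, h2])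

def S4 (x y z w : ℝ) : Prop :=
    (x = -1 ∧ y = -1 ∧ z = 1 ∧ w = 1) ∨
    (x = -1 ∧ y = 0 ∧ z = 1 ∧ w = 0) ∨
    (x = -1 ∧ y = 1 ∧ z = 1 ∧ w = -1) ∨
    (x = 0 ∧ y = -1 ∧ z = 0 ∧ w = 1) ∨
    (x = 0 ∧ y = 0 ∧ z = 0 ∧ w = 0) ∨
    (x = 0 ∧ y = 1 ∧ z = 0 ∧ w = -1) ∨
    (x = 1 ∧ y = -1 ∧ z = -1 ∧ w = 1) ∨
    (x = 1 ∧ y = 0 ∧ z = -1 ∧ w = 0) ∨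
    (x = 1 ∧ y = 1 ∧ z = -1 ∧ w = -1)

noncomputable def cmat4 : ZMod 4 → ZMod 4 → ℝ :=
  fun j a => if j = a + 1 then 1 else if j = a - 1 then -1 else 0

lemma cmat4_00 : cmat4 (0 : ZMod 4) 0 = 0 := by rw [cmat4]; rw [if_neg (by decide), if_neg (by decide)]
lemma cmat4_01 : cmat4 (0 : ZMod 4) 1 = -1 := by rw [cmat4]; rw [if_neg (by decide), if_pos (by decide)]
lemma cmat4_02 : cmat4 (0 : ZMod 4) 2 = 0 := by rw [cmat4]; rw [if_neg (by decide), if_neg (by decide)]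
lemma cmat4_03 : cmat4 (0 : ZMod 4) 3 = 1 := by rw [cmat4]; rw [if_pos (by decide)]
lemma cmat4_10 : cmat4 (1 : ZMod 4) 0 = 1 := by rw [cmat4]; rw [if_pos (by decide)]
lemma cmat4_11 : cmat4 (1 : ZMod 4) 1 = 0 := by rw [cmat4]; rw [if_neg (by decide), if_neg (by decide)]
lemma cmat4_12 : cmat4 (1 : ZMod 4) 2 = -1 := by rw [cmat4]; rw [if_neg (by decide), if_pos (by decide)]
lemma cmat4_13 : cmat4 (1 : ZMod 4) 3 = 0 := by rw [cmat4]; rw [if_neg (by decide), if_neg (by decide)]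
lemma cmat4_20 : cmat4 (2 : ZMod 4) 0 = 0 := by rw [cmat4]; rw [if_neg (by decide), if_neg (by decide)]
lemma cmat4_21 : cmat4 (2 : ZMod 4) 1 = 1 := by rw [cmat4]; rw [if_pos (by decide)]
lemma cmat4_22 : cmat4 (2 : ZMod 4) 2 = 0 := by rw [cmat4]; rw [if_neg (by decide), if_neg (by decide)]
lemma cmat4_23 : cmat4 (2 : ZMod 4) 3 = -1 := by rw [cmat4]; rw [if_neg (by decide), if_pos (by decide)]
lemma cmat4_30 : cmat4 (3 : ZMod 4) 0 = -1 := by rw [cmat4]; rw [if_neg (by decide), if_pos (by decide)]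
lemma cmat4_31 : cmat4 (3 : ZMod 4) 1 = 0 := by rw [cmat4]; rw [if_neg (by decide), if_neg (by decide)]
lemma cmat4_32 : cmat4 (3 : ZMod 4) 2 = 1 := by rw [cmat4]; rw [if_pos (by decide)]
lemma cmat4_33 : cmat4 (3 : ZMod 4) 3 = 0 := by rw [cmat4]; rw [if_neg (by decide), if_neg (by decide)]

lemma S4_bound (x y z w : ℝ) (h : S4 x y z w) : x ≤ 2 ∧ y ≤ 2 ∧ z ≤ 2 ∧ w ≤ 2 := by
  simp only [S4] at h
  rcases h with ⟨rfl,rfl,rfl,rfl⟩|⟨rfl,rfl,rfl,rfl⟩|⟨rfl,rfl,rfl,rfl⟩|⟨rfl,rfl,rfl,rfl⟩|⟨rfl,rfl,rfl,rfl⟩|⟨rfl,rfl,rfl,rfl⟩|⟨rfl,rfl,rfl,rfl⟩|⟨rfl,rfl,rfl,rfl⟩|⟨rfl,rfl,rfl,rfl⟩ <;> norm_num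

lemma afp_tri4 : ∀ z : ZMod 4, z = 0 ∨ z = 1 ∨ z = 2 ∨ z = 3 := by decide

lemma afp_step4 (D : ZMod 4 → ℝ) (a b : ZMod 4)
    (hS : S4 (D 0) (D 1) (D 2) (D 3))
    (ha : ∀ j, D j ≤ D a)
    (hb : ∀ j, D j + cmat4 j a ≤ D b + cmat4 b a) :
    S4 (D 0 + cmat4 0 b) (D 1 + cmat4 1 b) (D 2 + cmat4 2 b) (D 3 + cmat4 3 b) := by
  have ha0 := ha (0 : ZMod 4)
  have ha1 := ha (1 : ZMod 4)
  have ha2 := ha (2 : ZMod 4)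
  have ha3 := ha (3 : ZMod 4)
  have hb0 := hb (0 : ZMod 4)
  have hb1 := hb (1 : ZMod 4)
  have hb2 := hb (2 : ZMod 4)
  have hb3 := hb (3 : ZMod 4)
  clear ha hb
  simp only [S4] at hS ⊢
  rcases afp_tri4 a with rfl|rfl|rfl|rfl <;>
    rcases afp_tri4 b with rfl|rfl|rfl|rfl <;>
    rcases hS with ⟨h0,h1,h2,h3⟩|⟨h0,h1,h2,h3⟩|⟨h0,h1,h2,h3⟩|⟨h0,h1,h2,h3⟩|⟨h0,h1,h2,h3⟩|⟨h0,h1,h2,h3⟩|⟨h0,h1,h2,h3⟩|⟨h0,h1,h2,h3⟩|⟨h0,h1,h2,h3⟩ <;>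
    (revert ha0 ha1 ha2 ha3 hb0 hb1 hb2 hb3; norm_num [cmat4_00, cmat4_01, cmat4_02, cmat4_03, cmat4_10, cmat4_11, cmat4_12, cmat4_13, cmat4_20, cmat4_21, cmat4_22, cmat4_23, cmat4_30, cmat4_31, cmat4_32, cmat4_33, h0, h1, h2, h3])

/-- In anticipatory fictitious play applied symmetrically to `Cⁿ` for `n = 3` or
`n = 4`, `max_j Δ_{t,j} ≤ 2` for all `t ≥ 1` and arbitrary tiebreaking, where
`Δ_t = t Cⁿ x̄_t`; consequently `max_j (Cⁿ x̄_t)_j ≤ 2/t`, i.e. the exploitability of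
`x̄_t` is `O(t⁻¹)`. -/
theorem afp_cyclic_bounded (n : ℕ) [NeZero n] (hn : n = 3 ∨ n = 4)
    (C : Matrix (ZMod n) (ZMod n) ℝ)
    (hC : ∀ i j : ZMod n, C i j = if i = j + 1 then 1 else if i = j - 1 then -1 else 0)
    (i i' : ℕ → ZMod n) (xbar xbar' : ℕ → ZMod n → ℝ)
    (hxbar : ∀ t, xbar t = ((t : ℝ))⁻¹ • ∑ k ∈ Finset.Icc 1 t, (Pi.single (i k) 1 : ZMod n → ℝ))
    (hxbar' : ∀ t, xbar' (t+1) =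
      (((t : ℝ) + 1))⁻¹ • ((t : ℝ) • xbar t + (Pi.single (i' (t+1)) 1 : ZMod n → ℝ)))
    (hBR' : ∀ t, 1 ≤ t → ∀ j, C.mulVec (xbar t) j ≤ C.mulVec (xbar t) (i' (t+1)))
    (hBR : ∀ t, 1 ≤ t → ∀ j, C.mulVec (xbar' (t+1)) j ≤ C.mulVec (xbar' (t+1)) (i (t+1))) :
    ∀ t : ℕ, 1 ≤ t → ∀ j,
      (t : ℝ) * C.mulVec (xbar t) j ≤ 2 ∧ C.mulVec (xbar t) j ≤ 2 / (t : ℝ) := by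
  rcases hn with rfl | rfl
  · have hCe : ∀ j a : ZMod 3, C j a = cmat3 j a := fun j a => by rw [hC]; rfl
    have hpos : ∀ t : ℕ, 1 ≤ t → (0:ℝ) < t := by
      intro t ht; exact_mod_cast Nat.pos_of_ne_zero (by omega)
    have hsum : ∀ (t : ℕ) (j : ZMod 3), C.mulVec (xbar t) j
        = (t:ℝ)⁻¹ * ∑ k ∈ Finset.Icc 1 t, cmat3 j (i k) := by
      intro t j
      rw [hxbar, Matrix.mulVec_smul, Pi.smul_apply, smul_eq_mul]
      congr 1
      simp only [Matrix.mulVec, dotProduct, Finset.sum_apply, Finset.mul_sum]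
      rw [Finset.sum_comm]
      simp [Pi.single_apply, hCe]
    have hDelta : ∀ (t : ℕ), 1 ≤ t → ∀ j, (t:ℝ) * C.mulVec (xbar t) j
        = ∑ k ∈ Finset.Icc 1 t, cmat3 j (i k) := by
      intro t ht j
      have htne : (t:ℝ) ≠ 0 := ne_of_gt (hpos t ht)
      rw [hsum, ← mul_assoc, mul_inv_cancel₀ htne, one_mul]
    have hxp : ∀ t : ℕ, 1 ≤ t → ∀ j, C.mulVec (xbar' (t+1)) j
        = ((t:ℝ)+1)⁻¹ * ((∑ k ∈ Finset.Icc 1 t, cmat3 j (i k)) + cmat3 j (i' (t+1))) := by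
      intro t ht j
      rw [hxbar' t, Matrix.mulVec_smul, Pi.smul_apply, smul_eq_mul]
      congr 1
      rw [Matrix.mulVec_add, Pi.add_apply, Matrix.mulVec_smul, Pi.smul_apply, smul_eq_mul,
        hDelta t ht j]
      congr 1
      simp [Matrix.mulVec_single, hCe]
    have hA : ∀ t : ℕ, 1 ≤ t → ∀ j, (∑ k ∈ Finset.Icc 1 t, cmat3 j (i k))
        ≤ ∑ k ∈ Finset.Icc 1 t, cmat3 (i' (t+1)) (i k) := by
      intro t ht j
      have h := hBR' t ht j
      rw [hsum t j, hsum t (i' (t+1))] at h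
      exact (mul_le_mul_iff_right₀ (inv_pos.mpr (hpos t ht))).mp h
    have hB : ∀ t : ℕ, 1 ≤ t → ∀ j,
        (∑ k ∈ Finset.Icc 1 t, cmat3 j (i k)) + cmat3 j (i' (t+1))
        ≤ (∑ k ∈ Finset.Icc 1 t, cmat3 (i (t+1)) (i k)) + cmat3 (i (t+1)) (i' (t+1)) := by
      intro t ht j
      have h := hBR t ht j
      rw [hxp t ht j, hxp t ht (i (t+1))] at h
      have hp : (0:ℝ) < ((t:ℝ)+1)⁻¹ := by positivity
      exact (mul_le_mul_iff_right₀ hp).mp h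
    have hrec : ∀ (t : ℕ) (j : ZMod 3), ∑ k ∈ Finset.Icc 1 (t+1), cmat3 j (i k)
        = (∑ k ∈ Finset.Icc 1 t, cmat3 j (i k)) + cmat3 j (i (t+1)) := by
      intro t j
      exact Finset.sum_Icc_succ_top (by omega) _
    have key : ∀ t : ℕ, 1 ≤ t → S3 (∑ k ∈ Finset.Icc 1 t, cmat3 0 (i k)) (∑ k ∈ Finset.Icc 1 t, cmat3 1 (i k)) (∑ k ∈ Finset.Icc 1 t, cmat3 2 (i k)) := by
      intro t ht
      induction t, ht using Nat.le_induction with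
      | base =>
          have e : ∀ j : ZMod 3, ∑ k ∈ Finset.Icc 1 1, cmat3 j (i k) = cmat3 j (i 1) :=
            fun j => by simp
          rw [e, e, e]
          rcases afp_tri3 (i 1) with h|h|h <;> rw [h] <;> norm_num [S3, cmat3_00, cmat3_01, cmat3_02, cmat3_10, cmat3_11, cmat3_12, cmat3_20, cmat3_21, cmat3_22]
      | succ t ht IH =>
          rw [hrec, hrec, hrec]
          exact afp_step3 (fun j => ∑ k ∈ Finset.Icc 1 t, cmat3 j (i k))
            (i' (t+1)) (i (t+1)) IH (hA t ht) (hB t ht)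
    intro t ht j
    have hb := S3_bound _ _ _ (key t ht)
    have hj : (t:ℝ) * C.mulVec (xbar t) j ≤ 2 := by
      rw [hDelta t ht j]
      rcases afp_tri3 j with h|h|h <;> rw [h]
      · exact hb.1
      · exact hb.2.1
      · exact hb.2.2
    refine ⟨hj, ?_⟩
    rw [le_div_iff₀ (hpos t ht), mul_comm]
    exact hj
  · have hCe : ∀ j a : ZMod 4, C j a = cmat4 j a := fun j a => by rw [hC]; rfl
    have hpos : ∀ t : ℕ, 1 ≤ t → (0:ℝ) < t := by
      intro t ht; exact_mod_cast Nat.pos_of_ne_zero (by omega)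
    have hsum : ∀ (t : ℕ) (j : ZMod 4), C.mulVec (xbar t) j
        = (t:ℝ)⁻¹ * ∑ k ∈ Finset.Icc 1 t, cmat4 j (i k) := by
      intro t j
      rw [hxbar, Matrix.mulVec_smul, Pi.smul_apply, smul_eq_mul]
      congr 1
      simp only [Matrix.mulVec, dotProduct, Finset.sum_apply, Finset.mul_sum]
      rw [Finset.sum_comm]
      simp [Pi.single_apply, hCe]
    have hDelta : ∀ (t : ℕ), 1 ≤ t → ∀ j, (t:ℝ) * C.mulVec (xbar t) j
        = ∑ k ∈ Finset.Icc 1 t, cmat4 j (i k) := by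
      intro t ht j
      have htne : (t:ℝ) ≠ 0 := ne_of_gt (hpos t ht)
      rw [hsum, ← mul_assoc, mul_inv_cancel₀ htne, one_mul]
    have hxp : ∀ t : ℕ, 1 ≤ t → ∀ j, C.mulVec (xbar' (t+1)) j
        = ((t:ℝ)+1)⁻¹ * ((∑ k ∈ Finset.Icc 1 t, cmat4 j (i k)) + cmat4 j (i' (t+1))) := by
      intro t ht j
      rw [hxbar' t, Matrix.mulVec_smul, Pi.smul_apply, smul_eq_mul]
      congr 1
      rw [Matrix.mulVec_add, Pi.add_apply, Matrix.mulVec_smul, Pi.smul_apply, smul_eq_mul,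
        hDelta t ht j]
      congr 1
      simp [Matrix.mulVec_single, hCe]
    have hA : ∀ t : ℕ, 1 ≤ t → ∀ j, (∑ k ∈ Finset.Icc 1 t, cmat4 j (i k))
        ≤ ∑ k ∈ Finset.Icc 1 t, cmat4 (i' (t+1)) (i k) := by
      intro t ht j
      have h := hBR' t ht j
      rw [hsum t j, hsum t (i' (t+1))] at h
      exact (mul_le_mul_iff_right₀ (inv_pos.mpr (hpos t ht))).mp h
    have hB : ∀ t : ℕ, 1 ≤ t → ∀ j,
        (∑ k ∈ Finset.Icc 1 t, cmat4 j (i k)) + cmat4 j (i' (t+1))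
        ≤ (∑ k ∈ Finset.Icc 1 t, cmat4 (i (t+1)) (i k)) + cmat4 (i (t+1)) (i' (t+1)) := by
      intro t ht j
      have h := hBR t ht j
      rw [hxp t ht j, hxp t ht (i (t+1))] at h
      have hp : (0:ℝ) < ((t:ℝ)+1)⁻¹ := by positivity
      exact (mul_le_mul_iff_right₀ hp).mp h
    have hrec : ∀ (t : ℕ) (j : ZMod 4), ∑ k ∈ Finset.Icc 1 (t+1), cmat4 j (i k)
        = (∑ k ∈ Finset.Icc 1 t, cmat4 j (i k)) + cmat4 j (i (t+1)) := by
      intro t j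
      exact Finset.sum_Icc_succ_top (by omega) _
    have key : ∀ t : ℕ, 1 ≤ t → S4 (∑ k ∈ Finset.Icc 1 t, cmat4 0 (i k)) (∑ k ∈ Finset.Icc 1 t, cmat4 1 (i k)) (∑ k ∈ Finset.Icc 1 t, cmat4 2 (i k)) (∑ k ∈ Finset.Icc 1 t, cmat4 3 (i k)) := by
      intro t ht
      induction t, ht using Nat.le_induction with
      | base =>
          have e : ∀ j : ZMod 4, ∑ k ∈ Finset.Icc 1 1, cmat4 j (i k) = cmat4 j (i 1) :=
            fun j => by simp
          rw [e, e, e, e]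
          rcases afp_tri4 (i 1) with h|h|h|h <;> rw [h] <;> norm_num [S4, cmat4_00, cmat4_01, cmat4_02, cmat4_03, cmat4_10, cmat4_11, cmat4_12, cmat4_13, cmat4_20, cmat4_21, cmat4_22, cmat4_23, cmat4_30, cmat4_31, cmat4_32, cmat4_33]
      | succ t ht IH =>
          rw [hrec, hrec, hrec, hrec]
          exact afp_step4 (fun j => ∑ k ∈ Finset.Icc 1 t, cmat4 j (i k))
            (i' (t+1)) (i (t+1)) IH (hA t ht) (hB t ht)
    intro t ht j
    have hb := S4_bound _ _ _ _ (key t ht)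
    have hj : (t:ℝ) * C.mulVec (xbar t) j ≤ 2 := by
      rw [hDelta t ht j]
      rcases afp_tri4 j with h|h|h|h <;> rw [h]
      · exact hb.1
      · exact hb.2.1
      · exact hb.2.2.1
      · exact hb.2.2.2
    refine ⟨hj, ?_⟩
    rw [le_div_iff₀ (hpos t ht), mul_comm]
    exact hj
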